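/- Let m, n be natural numbers and define ω(i,j) = 2^{(n+1)·i + (n−j)} for (i,j) ∈ {0,…,m}×{0,…,n}. Then for every staircase p_0,…,p_{m+n} from (0,0) to (m,n) there exists an affine map A : ℝ^{m+n} → ℝ such that A(w(p_t)) = ω(p_t) for every t ∈ {0,…,m+n}, and A(w(i,j)) < ω(i,j) for every (i,j) ∈ {0,…,m}×{0,…,n} that does not occur among p_0,…,p_{m+n}. (Hence ω is a lifting function whose lower convex hull induces the staircase triangulation, so the staircase triangulation of Δ_m × Δ_n is regular.) -/

import Mathlib

/-- A staircase from `(0,0)` to `(m,n)`. -/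
def IsStaircase (m n : ℕ) (p : Fin (m + n + 1) → ℕ × ℕ) : Prop :=
  p 0 = (0, 0) ∧ p (Fin.last (m + n)) = (m, n) ∧
    ∀ t : Fin (m + n), p t.succ = p t.castSucc + (1, 0) ∨ p t.succ = p t.castSucc + (0, 1)

/-- `stdVert d k` is the vertex `e_k` of the standard simplex `Δ_d ⊂ ℝ^d`: the `k`-th
standard unit vector for `1 ≤ k ≤ d`, and the origin for `k = 0`. -/
noncomputable def stdVert (d k : ℕ) : Fin d → ℝ := fun a => if (a : ℕ) + 1 = k then 1 else 0

/-- The vertex `w(i,j) = (e_i, e_j) ∈ ℝ^{m+n}` of the product `Δ_m × Δ_n`. -/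
noncomputable def wPt (m n : ℕ) (v : ℕ × ℕ) : Fin (m + n) → ℝ :=
  Fin.append (stdVert m v.1) (stdVert n v.2)

/-- The lifting function `ω(i,j) = 2^{(n+1)·i + (n−j)}` given by the lexrev ordering. -/
noncomputable def liftFn (n : ℕ) (v : ℕ × ℕ) : ℝ := 2 ^ ((n + 1) * v.1 + (n - v.2))
namespace STR

variable {m n : ℕ} {p : Fin (m + n + 1) → ℕ × ℕ}

/-- Extension of the staircase to all of ℕ. -/
def q (m n : ℕ) (p : Fin (m + n + 1) → ℕ × ℕ) (t : ℕ) : ℕ × ℕ :=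
  p ⟨min t (m + n), by omega⟩

lemma q_of_le (ht : t ≤ m + n) : q m n p t = p ⟨t, by omega⟩ := by
  simp [q, Nat.min_eq_left ht]

lemma q_zero (hp : IsStaircase m n p) : q m n p 0 = (0, 0) := by
  rw [q_of_le (Nat.zero_le _)]
  exact hp.1

lemma q_last (hp : IsStaircase m n p) : q m n p (m + n) = (m, n) := by
  rw [q_of_le le_rfl]
  exact hp.2.1

lemma q_step (hp : IsStaircase m n p) {t : ℕ} (ht : t < m + n) :
    q m n p (t + 1) = q m n p t + (1, 0) ∨ q m n p (t + 1) = q m n p t + (0, 1) := by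
  have := hp.2.2 ⟨t, ht⟩
  rw [q_of_le (by omega), q_of_le (by omega)]
  convert this using 3 <;> rfl

end STR

namespace STR2
open STR

variable {m n : ℕ} {p : Fin (m + n + 1) → ℕ × ℕ}

lemma q_stable (hp : IsStaircase m n p) {t : ℕ} (ht : m + n ≤ t) : q m n p t = (m, n) := by
  have : q m n p t = q m n p (m + n) := by
    simp [q, Nat.min_eq_right ht]
  rw [this, q_last hp]

lemma step1 (hp : IsStaircase m n p) (t : ℕ) :
    (q m n p (t+1)).1 = (q m n p t).1 ∨ (q m n p (t+1)).1 = (q m n p t).1 + 1 := by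
  rcases lt_or_ge t (m + n) with ht | ht
  · rcases q_step hp ht with h | h <;> rw [h] <;> simp [Prod.ext_iff]
  · left; rw [q_stable hp ht, q_stable hp (by omega)]

lemma step2 (hp : IsStaircase m n p) (t : ℕ) :
    (q m n p (t+1)).2 = (q m n p t).2 ∨ (q m n p (t+1)).2 = (q m n p t).2 + 1 := by
  rcases lt_or_ge t (m + n) with ht | ht
  · rcases q_step hp ht with h | h <;> rw [h] <;> simp [Prod.ext_iff]
  · left; rw [q_stable hp ht, q_stable hp (by omega)]

lemma mono_of_step {f : ℕ → ℕ} (hf : ∀ t, f (t+1) = f t ∨ f (t+1) = f t + 1) :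
    Monotone f := by
  apply monotone_nat_of_le_succ
  intro t; rcases hf t with h | h <;> omega

lemma mono1 (hp : IsStaircase m n p) : Monotone (fun t => (q m n p t).1) :=
  mono_of_step (step1 hp)

lemma mono2 (hp : IsStaircase m n p) : Monotone (fun t => (q m n p t).2) :=
  mono_of_step (step2 hp)

lemma sum_eq (hp : IsStaircase m n p) {t : ℕ} (ht : t ≤ m + n) :
    (q m n p t).1 + (q m n p t).2 = t := by
  induction t with
  | zero => rw [q_zero hp]; rfl
  | succ k ih =>
    have hk : k < m + n := by omega
    have := ih (by omega)
    rcases q_step hp hk with h | h <;> rw [h] <;> simp <;> omega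

lemma fst_le (hp : IsStaircase m n p) (t : ℕ) : (q m n p t).1 ≤ m := by
  rcases le_or_gt t (m+n) with ht | ht
  · have := mono1 hp ht
    simp only at this
    rw [q_last hp] at this; exact this
  · rw [q_stable hp (by omega)]

lemma snd_le (hp : IsStaircase m n p) (t : ℕ) : (q m n p t).2 ≤ n := by
  rcases le_or_gt t (m+n) with ht | ht
  · have := mono2 hp ht
    simp only at this
    rw [q_last hp] at this; exact this
  · rw [q_stable hp (by omega)]

/-- Integer IVT: there is a step of `f` from `v` to `v+1` below `T`. -/
lemma exists_step {f : ℕ → ℕ} (hf : ∀ t, f (t+1) = f t ∨ f (t+1) = f t + 1)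
    {v T : ℕ} (h0 : f 0 ≤ v) (hT : v < f T) :
    ∃ t < T, f t = v ∧ f (t+1) = v + 1 := by
  induction T with
  | zero => omega
  | succ k ih =>
    rcases lt_or_ge v (f k) with h | h
    · obtain ⟨t, ht, h1, h2⟩ := ih h
      exact ⟨t, by omega, h1, h2⟩
    · exact ⟨k, by omega, by rcases hf k with h' | h' <;> omega,
        by rcases hf k with h' | h' <;> omega⟩

lemma exists_val {f : ℕ → ℕ} (hf : ∀ t, f (t+1) = f t ∨ f (t+1) = f t + 1)
    {v T : ℕ} (h0 : f 0 ≤ v) (hT : v ≤ f T) :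
    ∃ t ≤ T, f t = v := by
  rcases eq_or_lt_of_le hT with h | h
  · exact ⟨T, le_rfl, h.symm⟩
  · obtain ⟨t, ht, h1, _⟩ := exists_step hf h0 h
    exact ⟨t, by omega, h1⟩

end STR2

namespace STR3
open STR STR2

variable {m n : ℕ} {p : Fin (m + n + 1) → ℕ × ℕ}

/-- The step increment of the lifting function at time `t`. -/
noncomputable def dl (m n : ℕ) (p : Fin (m+n+1) → ℕ×ℕ) (t : ℕ) : ℝ :=
  liftFn n (q m n p (t+1)) - liftFn n (q m n p t)

noncomputable def alphaF (m n : ℕ) (p : Fin (m+n+1) → ℕ×ℕ) (i : ℕ) : ℝ :=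
  ∑ t ∈ Finset.range (m+n),
    if (q m n p t).1 < i ∧ (q m n p (t+1)).1 = (q m n p t).1 + 1 then dl m n p t else 0

noncomputable def betaF (m n : ℕ) (p : Fin (m+n+1) → ℕ×ℕ) (j : ℕ) : ℝ :=
  ∑ t ∈ Finset.range (m+n),
    if (q m n p t).2 < j ∧ (q m n p (t+1)).2 = (q m n p t).2 + 1 then dl m n p t else 0

lemma alphaF_zero : alphaF m n p 0 = 0 := by simp [alphaF]

lemma betaF_zero : betaF m n p 0 = 0 := by simp [betaF]

lemma Hstep (hp : IsStaircase m n p) {t : ℕ} (ht : t < m + n)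
    (hh : (q m n p (t+1)).1 = (q m n p t).1 + 1) :
    alphaF m n p ((q m n p t).1 + 1) = alphaF m n p ((q m n p t).1) + dl m n p t := by
  set i := (q m n p t).1 with hi
  have key : ∀ t' ∈ Finset.range (m+n),
      (if (q m n p t').1 < i + 1 ∧ (q m n p (t'+1)).1 = (q m n p t').1 + 1 then dl m n p t' else 0)
      = (if (q m n p t').1 < i ∧ (q m n p (t'+1)).1 = (q m n p t').1 + 1 then dl m n p t' else 0)
        + (if t' = t then dl m n p t' else 0) := by
    intro t' _
    rcases lt_trichotomy t' t with h | h | h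
    · have hle : (q m n p (t'+1)).1 ≤ i := mono1 hp (by omega)
      have : ¬ (t' = t) := by omega
      simp only [this, if_neg, if_false]
      by_cases hv : (q m n p (t'+1)).1 = (q m n p t').1 + 1
      · have h1 : (q m n p t').1 < i := by omega
        rw [if_pos ⟨by omega, hv⟩, if_pos ⟨h1, hv⟩, add_zero]
      · rw [if_neg (by tauto), if_neg (by tauto), add_zero]
    · subst h
      rw [if_pos ⟨by omega, hh⟩, if_neg (by omega), if_pos rfl, zero_add]
    · have hge : i + 1 ≤ (q m n p t').1 := by
        have := mono1 hp (show t + 1 ≤ t' by omega)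
        simp only at this; omega
      have : ¬ (t' = t) := by omega
      rw [if_neg (by omega), if_neg (by omega), if_neg this, add_zero]
  rw [alphaF, Finset.sum_congr rfl key, Finset.sum_add_distrib, ← alphaF,
    Finset.sum_ite_eq' _ t, if_pos (Finset.mem_range.mpr ht)]

lemma Vstep (hp : IsStaircase m n p) {t : ℕ} (ht : t < m + n)
    (hh : (q m n p (t+1)).2 = (q m n p t).2 + 1) :
    betaF m n p ((q m n p t).2 + 1) = betaF m n p ((q m n p t).2) + dl m n p t := by
  set j := (q m n p t).2 with hj
  have key : ∀ t' ∈ Finset.range (m+n),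
      (if (q m n p t').2 < j + 1 ∧ (q m n p (t'+1)).2 = (q m n p t').2 + 1 then dl m n p t' else 0)
      = (if (q m n p t').2 < j ∧ (q m n p (t'+1)).2 = (q m n p t').2 + 1 then dl m n p t' else 0)
        + (if t' = t then dl m n p t' else 0) := by
    intro t' _
    rcases lt_trichotomy t' t with h | h | h
    · have hle : (q m n p (t'+1)).2 ≤ j := mono2 hp (by omega)
      have : ¬ (t' = t) := by omega
      simp only [this, if_neg, if_false]
      by_cases hv : (q m n p (t'+1)).2 = (q m n p t').2 + 1
      · have h1 : (q m n p t').2 < j := by omega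
        rw [if_pos ⟨by omega, hv⟩, if_pos ⟨h1, hv⟩, add_zero]
      · rw [if_neg (by tauto), if_neg (by tauto), add_zero]
    · subst h
      rw [if_pos ⟨by omega, hh⟩, if_neg (by omega), if_pos rfl, zero_add]
    · have hge : j + 1 ≤ (q m n p t').2 := by
        have := mono2 hp (show t + 1 ≤ t' by omega)
        simp only at this; omega
      have : ¬ (t' = t) := by omega
      rw [if_neg (by omega), if_neg (by omega), if_neg this, add_zero]
  rw [betaF, Finset.sum_congr rfl key, Finset.sum_add_distrib, ← betaF,
    Finset.sum_ite_eq' _ t, if_pos (Finset.mem_range.mpr ht)]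

/-- The value of the affine function at vertex `(i,j)`. -/
noncomputable def V (m n : ℕ) (p : Fin (m+n+1) → ℕ×ℕ) (i j : ℕ) : ℝ :=
  2 ^ n + alphaF m n p i + betaF m n p j

lemma E (hp : IsStaircase m n p) {t : ℕ} (ht : t ≤ m + n) :
    V m n p (q m n p t).1 (q m n p t).2 = liftFn n (q m n p t) := by
  induction t with
  | zero =>
    rw [q_zero hp]
    simp [V, alphaF_zero, betaF_zero, liftFn]
  | succ k ih =>
    have hk : k < m + n := by omega
    have ihk := ih (by omega)
    rcases q_step hp hk with h | h
    · have h1 : (q m n p (k+1)).1 = (q m n p k).1 + 1 := by rw [h]; rfl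
      have h2 : (q m n p (k+1)).2 = (q m n p k).2 := by rw [h]; rfl
      rw [V, h1, h2, Hstep hp hk h1]
      rw [V] at ihk
      rw [dl]; ring_nf; ring_nf at ihk; linarith
    · have h1 : (q m n p (k+1)).1 = (q m n p k).1 := by rw [h]; rfl
      have h2 : (q m n p (k+1)).2 = (q m n p k).2 + 1 := by rw [h]; rfl
      rw [V, h1, h2, Vstep hp hk h2]
      rw [V] at ihk
      rw [dl]; ring_nf; ring_nf at ihk; linarith

end STR3

namespace STR4
open STR STR2 STR3

variable {m n : ℕ} {p : Fin (m + n + 1) → ℕ × ℕ}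

/-- The vertical step at height `k`: its time and the resulting update of `betaF`. -/
lemma vert_time (hp : IsStaircase m n p) {k : ℕ} (hk : k < n) :
    ∃ t < m + n, (q m n p t).2 = k ∧ (q m n p (t+1)).1 = (q m n p t).1 ∧
      (q m n p (t+1)).2 = k + 1 ∧
      betaF m n p (k+1)
        = betaF m n p k - 2 ^ ((n+1) * (q m n p t).1 + (n - k - 1)) := by
  obtain ⟨t, ht, h1, h2⟩ := exists_step (f := fun t => (q m n p t).2) (step2 hp)
    (v := k) (T := m + n)
    (by show (q m n p 0).2 ≤ k; rw [q_zero hp]; exact Nat.zero_le _)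
    (by show k < (q m n p (m+n)).2; rw [q_last hp]; exact hk)
  -- h1 h2 already beta-reduced
  have hsum := sum_eq hp (show t ≤ m + n by omega)
  have hsum' := sum_eq hp (show t + 1 ≤ m + n by omega)
  have hc : (q m n p (t+1)).1 = (q m n p t).1 := by omega
  refine ⟨t, ht, h1, hc, h2, ?_⟩
  have hb := Vstep hp ht (by omega)
  rw [h1] at hb
  rw [hb, dl]
  have hq1 : q m n p (t+1) = ((q m n p t).1, k+1) := by
    rw [← hc]; rw [Prod.ext_iff]; exact ⟨rfl, h2⟩
  have hq0 : q m n p t = ((q m n p t).1, k) := by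
    rw [Prod.ext_iff]; exact ⟨rfl, h1⟩
  rw [hq1]
  conv_lhs => rw [hq0]
  simp only [liftFn]
  have e1 : (n + 1) * (q m n p t).1 + (n - (k+1)) = (n+1) * (q m n p t).1 + (n - k - 1) := by
    omega
  have e2 : (n + 1) * (q m n p t).1 + (n - k) = ((n+1) * (q m n p t).1 + (n - k - 1)) + 1 := by
    omega
  rw [e1, e2, pow_succ]
  ring

/-- Upward strict inequality above the exit height of column `i`. -/
lemma up (hp : IsStaircase m n p) {i tb : ℕ} (hi : i ≤ m) (htb : tb ≤ m + n)
    (hq1 : (q m n p tb).1 = i)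
    (hmax : ∀ t', tb < t' → t' ≤ m + n → (q m n p t').1 ≠ i) :
    ∀ d, (q m n p tb).2 + d ≤ n →
      V m n p i ((q m n p tb).2 + d) ≤ liftFn n (i, (q m n p tb).2 + d) ∧
      (0 < d → V m n p i ((q m n p tb).2 + d) < liftFn n (i, (q m n p tb).2 + d)) := by
  intro d
  induction d with
  | zero =>
    intro _
    have hE := E hp htb
    rw [hq1] at hE
    have hqe : ((i : ℕ), (q m n p tb).2) = q m n p tb := by
      rw [Prod.ext_iff]; exact ⟨hq1.symm, rfl⟩
    constructor
    · rw [Nat.add_zero, hqe]; exact le_of_eq hE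
    · omega
  | succ d ih =>
    intro hle
    set k := (q m n p tb).2 + d with hkdef
    have hkn : k < n := by omega
    have IH := ih (by omega)
    obtain ⟨t, ht, h2k, h1c, h2s, hbeta⟩ := vert_time hp hkn
    have httb : tb ≤ t := by
      by_contra hcon
      push_neg at hcon
      have := mono2 hp (show t + 1 ≤ tb by omega)
      simp only at this
      omega
    have hIi : i ≤ (q m n p t).1 := by
      have := mono1 hp httb
      simp only at this; omega
    have hstrict : d = 0 → i + 1 ≤ (q m n p t).1 := by
      intro hd
      have him : i < m := by
        by_contra hm'
        have him' : i = m := by omega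
        have htb' : tb = m + n := by
          rcases eq_or_lt_of_le htb with h | h
          · exact h
          · exact absurd (by rw [q_last hp, him']) (hmax _ h le_rfl)
        have : (q m n p tb).2 = n := by rw [htb', q_last hp]
        omega
      have htbm : tb < m + n := by
        rcases eq_or_lt_of_le htb with h | h
        · exfalso; rw [h, q_last hp] at hq1; omega
        · exact h
      have hnext : (q m n p (tb+1)).1 = i + 1 := by
        rcases step1 hp tb with h | h
        · exact absurd (h.trans hq1) (hmax (tb+1) (by omega) (by omega))
        · omega
      have htne : t ≠ tb := by
        intro h
        rw [h] at h1c
        omega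
      have := mono1 hp (show tb + 1 ≤ t by omega)
      simp only at this
      omega
    -- arithmetic
    set I := (q m n p t).1 with hIdef
    have hnk1 : n - (k+1) = n - k - 1 := by omega
    set ei := (n+1) * i + (n - k - 1) with heidef
    have heiI : ei ≤ (n+1) * I + (n - k - 1) := by
      have : (n+1) * i ≤ (n+1) * I := Nat.mul_le_mul_left _ hIi
      omega
    have hVk1 : V m n p i (k+1) = V m n p i k - 2 ^ ((n+1) * I + (n - k - 1)) := by
      simp only [V, hbeta]; ring
    have homk : liftFn n (i, k) = 2 * 2 ^ ei := by
      simp only [liftFn]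
      have : (n+1) * i + (n - k) = ei + 1 := by omega
      rw [this, pow_succ]; ring
    have homk1 : liftFn n (i, k+1) = 2 ^ ei := by
      simp only [liftFn]
      rw [show (n+1) * i + (n - (k+1)) = ei by omega]
    have hgoal : V m n p i (k+1) < liftFn n (i, k+1) := by
      rcases Nat.eq_zero_or_pos d with hd | hd
      · have hIi1 := hstrict hd
        have : ((2:ℝ)) ^ (ei + 1) ≤ 2 ^ ((n+1) * I + (n - k - 1)) := by
          apply pow_le_pow_right₀ one_le_two
          have h1 : (n+1) * (i+1) ≤ (n+1) * I := Nat.mul_le_mul_left _ hIi1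
          have h2 : (n+1) * (i+1) = (n+1) * i + (n+1) := by ring
          omega
        rw [pow_succ] at this
        have h2 : (0:ℝ) < 2 ^ ei := by positivity
        rw [hVk1, homk1]
        have := IH.1
        rw [homk] at this
        nlinarith
      · have hVlt := IH.2 hd
        rw [homk] at hVlt
        have hple : ((2:ℝ)) ^ ei ≤ 2 ^ ((n+1) * I + (n - k - 1)) :=
          pow_le_pow_right₀ one_le_two heiI
        rw [hVk1, homk1]
        nlinarith
    have hshift : (q m n p tb).2 + (d + 1) = k + 1 := by omega
    rw [hshift]
    exact ⟨le_of_lt hgoal, fun _ => hgoal⟩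

end STR4

namespace STR5
open STR STR2 STR3 STR4

variable {m n : ℕ} {p : Fin (m + n + 1) → ℕ × ℕ}

/-- Downward strict inequality below the entry height of column `i`. -/
lemma down (hp : IsStaircase m n p) {i ta : ℕ} (hta : ta ≤ m + n)
    (hq1 : (q m n p ta).1 = i)
    (hmin : ∀ t' < ta, (q m n p t').1 ≠ i) :
    ∀ d k, k + d = (q m n p ta).2 →
      V m n p i k ≤ liftFn n (i, k) ∧
      (0 < d → V m n p i k < liftFn n (i, k)) := by
  intro d
  induction d with
  | zero =>
    intro k hk
    rw [Nat.add_zero] at hk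
    subst hk
    have hE := E hp hta
    rw [hq1] at hE
    have hqe : ((i : ℕ), (q m n p ta).2) = q m n p ta := by
      rw [Prod.ext_iff]; exact ⟨hq1.symm, rfl⟩
    exact ⟨by rw [hqe]; exact le_of_eq hE, by omega⟩
  | succ d ih =>
    intro k hk
    have hkn : k < n := by
      have := snd_le hp ta
      omega
    have IH := ih (k+1) (by omega)
    obtain ⟨t, ht, h2k, h1c, h2s, hbeta⟩ := vert_time hp hkn
    have htta : t < ta := by
      by_contra hcon
      push_neg at hcon
      have := mono2 hp hcon
      simp only at this
      omega
    have hIi : (q m n p t).1 < i := by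
      have h1 := mono1 hp (le_of_lt htta)
      simp only at h1
      have h2 := hmin t htta
      omega
    set I := (q m n p t).1 with hIdef
    set ei := (n+1) * i + (n - k - 1) with heidef
    have heiI : (n+1) * I + (n - k - 1) < ei := by
      have h1 : (n+1) * (I+1) ≤ (n+1) * i := Nat.mul_le_mul_left _ hIi
      have h2 : (n+1) * (I+1) = (n+1) * I + (n+1) := by ring
      omega
    have hVk : V m n p i k = V m n p i (k+1) + 2 ^ ((n+1) * I + (n - k - 1)) := by
      simp only [V, hbeta]; ring
    have homk : liftFn n (i, k) = 2 * 2 ^ ei := by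
      simp only [liftFn]
      rw [show (n+1) * i + (n - k) = ei + 1 by omega, pow_succ]; ring
    have homk1 : liftFn n (i, k+1) = 2 ^ ei := by
      simp only [liftFn]
      rw [show (n+1) * i + (n - (k+1)) = ei by omega]
    have hplt : ((2:ℝ)) ^ ((n+1) * I + (n - k - 1)) < 2 ^ ei :=
      pow_lt_pow_right₀ one_lt_two heiI
    have hgoal : V m n p i k < liftFn n (i, k) := by
      have := IH.1
      rw [homk1] at this
      rw [hVk, homk]
      nlinarith
    exact ⟨le_of_lt hgoal, fun _ => hgoal⟩

end STR5

namespace STR6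
open STR STR2 STR3 STR4 STR5

variable {m n : ℕ} {p : Fin (m + n + 1) → ℕ × ℕ}

noncomputable def lin (m n : ℕ) (p : Fin (m+n+1) → ℕ×ℕ) : (Fin (m + n) → ℝ) →ₗ[ℝ] ℝ where
  toFun := fun x => ∑ a, (Fin.append (fun a : Fin m => alphaF m n p ((a:ℕ)+1))
      (fun b : Fin n => betaF m n p ((b:ℕ)+1))) a * x a
  map_add' := by
    intro x y
    simp [mul_add, Finset.sum_add_distrib]
  map_smul' := by
    intro r x
    simp [Finset.mul_sum]
    congr 1
    funext a
    ring

noncomputable def Amap (m n : ℕ) (p : Fin (m+n+1) → ℕ×ℕ) : (Fin (m + n) → ℝ) →ᵃ[ℝ] ℝ where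
  toFun := fun x => 2 ^ n + lin m n p x
  linear := lin m n p
  map_vadd' := by
    intro x v
    simp only [vadd_eq_add, map_add]
    ring

lemma sum_std (f : ℕ → ℝ) (hf0 : f 0 = 0) {d i : ℕ} (hi : i ≤ d) :
    ∑ a : Fin d, f ((a:ℕ)+1) * stdVert d i a = f i := by
  rcases Nat.eq_zero_or_pos i with h0 | hpos
  · subst h0
    simp [stdVert, hf0]
  · have hlt : i - 1 < d := by omega
    rw [Finset.sum_eq_single ⟨i-1, hlt⟩]
    · simp only [stdVert]
      rw [if_pos (by omega), mul_one]
      congr 1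
      omega
    · intro b _ hb
      simp only [stdVert]
      rw [if_neg, mul_zero]
      intro hcon
      apply hb
      apply Fin.ext
      show (b : ℕ) = i - 1
      omega
    · intro h
      exact absurd (Finset.mem_univ _) h

lemma Amap_eval (v : ℕ × ℕ) (hi : v.1 ≤ m) (hj : v.2 ≤ n) :
    Amap m n p (wPt m n v) = V m n p v.1 v.2 := by
  show 2 ^ n + lin m n p (wPt m n v) = _
  have : lin m n p (wPt m n v) = alphaF m n p v.1 + betaF m n p v.2 := by
    show (∑ a : Fin (m+n), (Fin.append (fun a : Fin m => alphaF m n p ((a:ℕ)+1))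
      (fun b : Fin n => betaF m n p ((b:ℕ)+1))) a * wPt m n v a) = _
    rw [wPt, Fin.sum_univ_add]
    simp only [Fin.append_left, Fin.append_right]
    rw [sum_std (alphaF m n p) alphaF_zero hi, sum_std (betaF m n p) betaF_zero hj]
  rw [this, V]
  ring

end STR6


/-- `ω(i,j) = 2^{(n+1)i + (n−j)}` is a lifting function inducing the staircase
triangulation: for every staircase `p` there is an affine map `A : ℝ^{m+n} → ℝ` with
`A(w(p_t)) = ω(p_t)` for all `t`, and `A(w(i,j)) < ω(i,j)` for all vertices `(i,j)` of
`Δ_m × Δ_n` not occurring on the staircase.  Hence the staircase triangulation is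
regular. -/
theorem staircase_triangulation_regular (m n : ℕ) (p : Fin (m + n + 1) → ℕ × ℕ)
    (hp : IsStaircase m n p) :
    ∃ A : (Fin (m + n) → ℝ) →ᵃ[ℝ] ℝ,
      (∀ t, A (wPt m n (p t)) = liftFn n (p t)) ∧
      ∀ i j : ℕ, i ≤ m → j ≤ n → (i, j) ∉ Set.range p →
        A (wPt m n (i, j)) < liftFn n (i, j) := by
  open STR STR2 STR3 STR4 STR5 STR6 in
  classical
  refine ⟨Amap m n p, ?_, ?_⟩
  · intro t
    have ht' : (t : ℕ) ≤ m + n := Nat.lt_succ_iff.mp t.isLt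
    have hpt : q m n p (t : ℕ) = p t := by rw [q_of_le ht']
    rw [← hpt, Amap_eval _ (fst_le hp _) (snd_le hp _)]
    exact E hp ht'
  · intro i j hi hj hnot
    obtain ⟨t0, ht0le, ht0⟩ := exists_val (f := fun t => (q m n p t).1) (step1 hp)
      (v := i) (T := m + n)
      (by show (q m n p 0).1 ≤ i; rw [q_zero hp]; exact Nat.zero_le _)
      (by show i ≤ (q m n p (m+n)).1; rw [q_last hp]; exact hi)
    have hPex : ∃ t, (q m n p t).1 = i := ⟨t0, ht0⟩
    set ta := Nat.find hPex with htadef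
    have hta1 : (q m n p ta).1 = i := Nat.find_spec hPex
    have htale : ta ≤ m + n := le_trans (Nat.find_min' hPex ht0) ht0le
    have hmin : ∀ t' < ta, (q m n p t').1 ≠ i := fun t' h => Nat.find_min hPex h
    set tb := Nat.findGreatest (fun t => (q m n p t).1 = i) (m+n) with htbdef
    have htb1 : (q m n p tb).1 = i := Nat.findGreatest_spec (P := fun t => (q m n p t).1 = i) ht0le ht0
    have htble : tb ≤ m + n := Nat.findGreatest_le _
    have hmax : ∀ t', tb < t' → t' ≤ m + n → (q m n p t').1 ≠ i :=
      fun t' h1 h2 => Nat.findGreatest_is_greatest (P := fun t => (q m n p t).1 = i) h1 h2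
    have hsum_ta := sum_eq hp htale
    have hsum_tb := sum_eq hp htble
    have hcase : j < (q m n p ta).2 ∨ (q m n p tb).2 < j := by
      by_contra hcon
      push_neg at hcon
      obtain ⟨h1, h2⟩ := hcon
      have h3 : ta ≤ i + j := by omega
      have h4 : i + j ≤ tb := by omega
      have h5 : (q m n p (i+j)).1 = i := by
        have a1 := mono1 hp h3
        have a2 := mono1 hp h4
        simp only at a1 a2
        omega
      have h6 : (q m n p (i+j)).2 = j := by
        have := sum_eq hp (by omega : i + j ≤ m + n)
        omega
      apply hnot
      refine ⟨⟨i+j, by omega⟩, ?_⟩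
      rw [← q_of_le (m := m) (n := n) (p := p) (show i + j ≤ m + n by omega), Prod.ext_iff]
      exact ⟨h5, h6⟩
    have heval := Amap_eval (m := m) (n := n) (p := p) (i, j) hi hj
    rw [heval]
    rcases hcase with hlt | hgt
    · exact (down hp htale hta1 hmin ((q m n p ta).2 - j) j (by omega)).2 (by omega)
    · have := (up hp hi htble htb1 hmax (j - (q m n p tb).2) (by omega)).2 (by omega)
      rw [show (q m n p tb).2 + (j - (q m n p tb).2) = j by omega] at this
      exact this
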